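/- The number of n×n integer matrices in Hermite normal form with determinant k > 0 and all row vectors primitive equals the sum over all tuples (d_1,...,d_n) of positive integers with d_1···d_n = k of the product over i = 1,...,n of (sum over divisors g of d_i of μ(g)(d_i/g)^{i-1}). -/

import Mathlib

open Finset ArithmeticFunction

/-- The set of n-tuples of positive integers with product k. -/
def tuples (n k : ℕ) : Finset (Fin n → ℕ) :=
  (Fintype.piFinset fun _ => k.divisors).filter fun d => ∏ i, d i = k

/-- a_n(k) = Σ_{d_1⋯d_n = k} d_1^0 d_2^1 ⋯ d_n^{n-1}. -/
def an (n k : ℕ) : ℕ := ∑ d ∈ tuples n k, ∏ i : Fin n, d i ^ (i : ℕ)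

/-- a_n'(k) = Σ_{d_1⋯d_n = k} Π_i Σ_{g ∣ d_i} μ(g) (d_i/g)^{i-1}. -/
def an' (n k : ℕ) : ℤ :=
  ∑ d ∈ tuples n k, ∏ i : Fin n,
    ∑ g ∈ (d i).divisors, moebius g * ((d i / g : ℕ) : ℤ) ^ (i : ℕ)


/-- C is a lower triangular matrix in (lower) Hermite normal form. -/
def IsHermiteNF {n : ℕ} (C : Matrix (Fin n) (Fin n) ℤ) : Prop :=
  (∀ i j : Fin n, i < j → C i j = 0) ∧
  (∀ i : Fin n, 0 < C i i) ∧
  (∀ i j : Fin n, j < i → 0 ≤ C i j ∧ C i j < C i i)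


lemma moebius_sum (e : ℕ) : ∑ g ∈ e.divisors, (moebius g : ℤ) = if e = 1 then 1 else 0 := by
  have := congrArg (fun f => f e) moebius_mul_coe_zeta
  simp only [coe_mul_zeta_apply] at this
  rw [this, one_apply]

lemma card_mult (D g : ℕ) (hg : g ∣ D) (hg0 : 0 < g) :
    ((range D).filter (g ∣ ·)).card = D / g := by
  have : (range D).filter (g ∣ ·) = (range (D / g)).image (g * ·) := by
    ext x
    simp only [mem_filter, mem_range, mem_image]
    constructor
    · rintro ⟨hx, t, rfl⟩
      exact ⟨t, by rw [Nat.lt_div_iff_mul_lt' hg]; omega, rfl⟩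
    · rintro ⟨t, ht, rfl⟩
      rw [Nat.lt_div_iff_mul_lt' hg] at ht
      exact ⟨by omega, Dvd.intro t rfl⟩
  rw [this, card_image_of_injective _ (mul_right_injective₀ hg0.ne'), card_range]

lemma count_gcd_one (m D : ℕ) (hD : 0 < D) :
    ((((Fintype.piFinset fun _ : Fin m => range D).filter
        fun c => Nat.gcd D (univ.gcd c) = 1).card : ℤ))
      = ∑ g ∈ D.divisors, moebius g * ((D / g : ℕ) : ℤ) ^ m := by
  classical
  rw [card_filter]
  push_cast
  have key : ∀ c : Fin m → ℕ, c ∈ (Fintype.piFinset fun _ : Fin m => range D) →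
      ((if Nat.gcd D (univ.gcd c) = 1 then 1 else 0) : ℤ)
        = ∑ g ∈ D.divisors, if g ∣ univ.gcd c then (moebius g : ℤ) else 0 := by
    intro c _
    have hpos : 0 < Nat.gcd D (univ.gcd c) := Nat.gcd_pos_of_pos_left _ hD
    rw [← moebius_sum]
    rw [← sum_filter]
    congr 1
    ext g
    simp only [Nat.mem_divisors, mem_filter, Nat.dvd_gcd_iff]
    constructor
    · rintro ⟨⟨h1, h2⟩, _⟩; exact ⟨⟨h1, hD.ne'⟩, h2⟩
    · rintro ⟨⟨h1, _⟩, h2⟩; exact ⟨⟨h1, h2⟩, hpos.ne'⟩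
  rw [sum_congr rfl key, sum_comm]
  refine sum_congr rfl fun g hg => ?_
  obtain ⟨hgD, -⟩ := Nat.mem_divisors.mp hg
  have hg0 : 0 < g := Nat.pos_of_mem_divisors hg
  rw [← sum_filter]
  have hfil : (Fintype.piFinset fun _ : Fin m => range D).filter (fun c => g ∣ univ.gcd c)
      = Fintype.piFinset fun _ : Fin m => (range D).filter (g ∣ ·) := by
    ext c
    simp only [mem_filter, Fintype.mem_piFinset, mem_filter]
    constructor
    · rintro ⟨h1, h2⟩
      exact fun j => ⟨h1 j, (h2.trans (gcd_dvd (mem_univ j)) : g ∣ c j)⟩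
    · intro h
      exact ⟨fun j => (h j).1, Finset.dvd_gcd fun j _ => (h j).2⟩
  rw [hfil, sum_const, Fintype.card_piFinset]
  simp only [card_mult D g hgD hg0, prod_const, card_univ, Fintype.card_fin]
  rw [nsmul_eq_mul, mul_comm]
  push_cast
  ring

def rowSet (n : ℕ) (i : Fin n) (D : ℕ) : Finset (Fin n → ℤ) :=
  ((Fintype.piFinset fun j : Fin n =>
      if j < i then (range D).image ((↑) : ℕ → ℤ) else if j = i then {(D : ℤ)} else {0}).filter
    fun r => univ.gcd (fun j => (r j).natAbs) = 1)

lemma mem_rowSet {n : ℕ} {i : Fin n} {D : ℕ} {r : Fin n → ℤ} :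
    r ∈ rowSet n i D ↔
      ((∀ j, j < i → 0 ≤ r j ∧ r j < (D : ℤ)) ∧ r i = (D : ℤ) ∧ ∀ j, i < j → r j = 0) ∧
        univ.gcd (fun j => (r j).natAbs) = 1 := by
  simp only [rowSet, mem_filter, Fintype.mem_piFinset]
  constructor
  · rintro ⟨h, hg⟩
    refine ⟨⟨fun j hj => ?_, ?_, fun j hj => ?_⟩, hg⟩
    · have := h j; rw [if_pos hj] at this
      simp only [mem_image, mem_range] at this
      obtain ⟨t, ht, hx⟩ := this
      constructor <;> omega
    · have := h i; simp only [lt_irrefl, if_neg, if_pos rfl] at this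
      simpa using this
    · have := h j; rw [if_neg (asymm hj), if_neg hj.ne'] at this
      simpa using this
  · rintro ⟨⟨h1, h2, h3⟩, hg⟩
    refine ⟨fun j => ?_, hg⟩
    rcases lt_trichotomy j i with hj | hj | hj
    · rw [if_pos hj]
      simp only [mem_image, mem_range]
      obtain ⟨ha, hb⟩ := h1 j hj
      exact ⟨(r j).toNat, by omega, by omega⟩
    · subst hj; simp only [lt_irrefl, if_neg, if_pos rfl]; simpa using h2
    · rw [if_neg (asymm hj), if_neg hj.ne']; simpa using h3 j hj

lemma gcd_row {n : ℕ} {i : Fin n} {D : ℕ} {r : Fin n → ℤ}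
    (h2 : r i = (D : ℤ)) (h3 : ∀ j, i < j → r j = 0) :
    univ.gcd (fun j => (r j).natAbs) =
      Nat.gcd D (univ.gcd fun t : Fin (i : ℕ) => (r ⟨t, lt_trans t.2 i.isLt⟩).natAbs) := by
  apply Nat.dvd_antisymm
  · apply Nat.dvd_gcd
    · have := Finset.gcd_dvd (mem_univ i) (f := fun j => (r j).natAbs)
      simp only [h2, Int.natAbs_natCast] at this
      exact this
    · exact Finset.dvd_gcd fun t _ =>
        Finset.gcd_dvd (mem_univ (⟨t, lt_trans t.2 i.isLt⟩ : Fin n))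
  · apply Finset.dvd_gcd
    intro j _
    rcases lt_trichotomy j i with hj | hj | hj
    · have := Finset.gcd_dvd (mem_univ (⟨(j : ℕ), hj⟩ : Fin (i : ℕ)))
        (f := fun t : Fin (i : ℕ) => (r ⟨t, lt_trans t.2 i.isLt⟩).natAbs)
      simp only at this
      exact dvd_trans (dvd_trans (Nat.gcd_dvd_right _ _) this) (by rfl)
    · subst hj
      simp only [h2, Int.natAbs_natCast]
      exact Nat.gcd_dvd_left _ _
    · simp only [h3 j hj]
      simp

lemma card_rowSet (n : ℕ) (i : Fin n) (D : ℕ) (hD : 0 < D) :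
    ((rowSet n i D).card : ℤ) = ∑ g ∈ D.divisors, moebius g * ((D / g : ℕ) : ℤ) ^ (i : ℕ) := by
  rw [← count_gcd_one (i : ℕ) D hD]
  congr 1
  apply Finset.card_bij'
    (i := fun r _ => fun t : Fin (i : ℕ) => (r ⟨t, lt_trans t.2 i.isLt⟩).natAbs)
    (j := fun c _ => fun j : Fin n =>
      if h : (j : ℕ) < (i : ℕ) then ((c ⟨j, h⟩ : ℕ) : ℤ) else if j = i then (D : ℤ) else 0)
  · -- maps to T
    intro r hr
    rw [mem_rowSet] at hr
    obtain ⟨⟨h1, h2, h3⟩, hg⟩ := hr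
    rw [mem_filter]
    constructor
    · rw [Fintype.mem_piFinset]
      intro t
      rw [mem_range]
      obtain ⟨ha, hb⟩ := h1 ⟨t, lt_trans t.2 i.isLt⟩ t.2
      omega
    · rw [← gcd_row h2 h3]; exact hg
  · -- maps back to rowSet
    intro c hc
    rw [mem_filter, Fintype.mem_piFinset] at hc
    obtain ⟨hc1, hc2⟩ := hc
    rw [mem_rowSet]
    have hrow1 : ∀ j : Fin n, j < i → (0:ℤ) ≤ (if h : (j : ℕ) < (i : ℕ) then ((c ⟨j, h⟩ : ℕ) : ℤ) else if j = i then (D : ℤ) else 0) ∧ (if h : (j : ℕ) < (i : ℕ) then ((c ⟨j, h⟩ : ℕ) : ℤ) else if j = i then (D : ℤ) else 0) < D := by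
      intro j hj
      rw [dif_pos (show (j:ℕ) < (i:ℕ) from hj)]
      have := hc1 ⟨j, hj⟩
      rw [mem_range] at this
      constructor
      · positivity
      · exact_mod_cast this
    have hrow2 : (if h : (i : ℕ) < (i : ℕ) then ((c ⟨i, h⟩ : ℕ) : ℤ) else if i = i then (D : ℤ) else 0) = (D : ℤ) := by
      rw [dif_neg (lt_irrefl _), if_pos rfl]
    have hrow3 : ∀ j : Fin n, i < j → (if h : (j : ℕ) < (i : ℕ) then ((c ⟨j, h⟩ : ℕ) : ℤ) else if j = i then (D : ℤ) else 0) = 0 := by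
      intro j hj
      rw [dif_neg (by omega : ¬ (j : ℕ) < (i : ℕ)), if_neg hj.ne']
    refine ⟨⟨hrow1, hrow2, hrow3⟩, ?_⟩
    rw [gcd_row hrow2 hrow3]
    convert hc2 using 3
    ext t
    rw [dif_pos t.2]
    simp
  · -- left inverse
    intro r hr
    rw [mem_rowSet] at hr
    obtain ⟨⟨h1, h2, h3⟩, _⟩ := hr
    funext j
    rcases lt_trichotomy j i with hj | hj | hj
    · rw [dif_pos (show (j:ℕ) < (i:ℕ) from hj)]
      obtain ⟨ha, _⟩ := h1 j hj
      simp only []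
      rw [Int.natAbs_of_nonneg ha]
    · subst hj
      rw [dif_neg (lt_irrefl _), if_pos rfl, h2]
    · rw [dif_neg (by omega : ¬ (j : ℕ) < (i : ℕ)), if_neg hj.ne', h3 j hj]
  · -- right inverse
    intro c hc
    funext t
    simp only [dif_pos t.2]
    simp


def matSet (n k : ℕ) : Finset (Matrix (Fin n) (Fin n) ℤ) :=
  (tuples n k).biUnion fun d => Fintype.piFinset fun i => rowSet n i (d i)

lemma mem_matSet {n k : ℕ} {C : Matrix (Fin n) (Fin n) ℤ} :
    C ∈ matSet n k ↔ ∃ d ∈ tuples n k, C ∈ Fintype.piFinset fun i => rowSet n i (d i) :=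
  Finset.mem_biUnion

lemma tuples_pos {n k : ℕ} {d : Fin n → ℕ} (hd : d ∈ tuples n k) (i : Fin n) : 0 < d i := by
  rw [tuples, mem_filter, Fintype.mem_piFinset] at hd
  exact Nat.pos_of_mem_divisors (hd.1 i)

lemma lowerTri {n : ℕ} {C : Matrix (Fin n) (Fin n) ℤ} (h : ∀ i j : Fin n, i < j → C i j = 0) :
    C.det = ∏ i, C i i :=
  Matrix.det_of_lowerTriangular C (fun i j hij => h i j (by simpa using hij))

lemma set_eq (n k : ℕ) (hk : 0 < k) :
    {C : Matrix (Fin n) (Fin n) ℤ | IsHermiteNF C ∧ C.det = (k : ℤ) ∧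
        ∀ i : Fin n, Finset.univ.gcd (fun j => (C i j).natAbs) = 1} = ↑(matSet n k) := by
  ext C
  simp only [Set.mem_setOf_eq, mem_coe, mem_matSet]
  constructor
  · rintro ⟨⟨htri, hdiag, hsub⟩, hdet, hgcd⟩
    refine ⟨fun i => (C i i).toNat, ?_, ?_⟩
    · rw [tuples, mem_filter, Fintype.mem_piFinset]
      have hprod : ∏ i, (((C i i).toNat : ℤ)) = (k : ℤ) := by
        rw [← hdet, lowerTri htri]
        exact prod_congr rfl fun i _ => Int.toNat_of_nonneg (hdiag i).le
      have hprodN : ∏ i, (C i i).toNat = k := by exact_mod_cast hprod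
      refine ⟨fun i => Nat.mem_divisors.mpr ⟨?_, hk.ne'⟩, hprodN⟩
      rw [← hprodN]; exact Finset.dvd_prod_of_mem _ (mem_univ i)
    · refine Fintype.mem_piFinset.mpr fun i => ?_
      rw [mem_rowSet]
      have hii : ((C i i).toNat : ℤ) = C i i := Int.toNat_of_nonneg (hdiag i).le
      refine ⟨⟨fun j hj => ?_, hii.symm, fun j hj => htri i j hj⟩, hgcd i⟩
      simp only []
      rw [hii]; exact hsub i j hj
  · rintro ⟨d, hd, hC⟩
    have hrows := fun i => (mem_rowSet).mp (Fintype.mem_piFinset.mp hC i)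
    have hdiag : ∀ i, C i i = (d i : ℤ) := fun i => (hrows i).1.2.1
    have htri : ∀ i j : Fin n, i < j → C i j = 0 := fun i j hj => (hrows i).1.2.2 j hj
    refine ⟨⟨htri, fun i => ?_, fun i j hj => ?_⟩, ?_, fun i => (hrows i).2⟩
    · rw [hdiag i]; exact_mod_cast tuples_pos hd i
    · rw [hdiag i]; exact (hrows i).1.1 j hj
    · rw [lowerTri htri]
      rw [tuples, mem_filter] at hd
      calc ∏ i, C i i = ∏ i, ((d i : ℤ)) := prod_congr rfl fun i _ => hdiag i
        _ = ((∏ i, d i : ℕ) : ℤ) := by push_cast; rfl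
        _ = (k : ℤ) := by rw [hd.2]


theorem count_hnf_primitive (n k : ℕ) (hn : 1 ≤ n) (hk : 0 < k) :
    ({C : Matrix (Fin n) (Fin n) ℤ | IsHermiteNF C ∧ C.det = (k : ℤ) ∧
        ∀ i : Fin n, Finset.univ.gcd (fun j => (C i j).natAbs) = 1}.ncard : ℤ) =
      an' n k := by
  rw [set_eq n k hk, Set.ncard_coe_finset, matSet, an']
  erw [Finset.card_biUnion]
  · push_cast
    refine sum_congr rfl fun d hd => ?_
    erw [Fintype.card_piFinset]
    push_cast
    exact prod_congr rfl fun i _ => card_rowSet n i (d i) (tuples_pos hd i)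
  · intro d hd e he hde
    refine Finset.disjoint_left.mpr ?_
    intro C hCd hCe
    apply hde
    funext i
    have h1 := ((mem_rowSet).mp ((Fintype.mem_piFinset).mp hCd i)).1.2.1
    have h2 := ((mem_rowSet).mp ((Fintype.mem_piFinset).mp hCe i)).1.2.1
    exact_mod_cast h1.symm.trans h2
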